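/- Let η, α, h_p, d_z, r_p, K be positive reals with C_P = ηα/d_z > 1 and C_Z = K C_P/(h_p+K) > 1, and set P* = d_z h_p/(ηα − d_z), Z* = (r_p/α)(1 − P*/K)(h_p + P*), and K^c = h_p(ηα + d_z)/(ηα − d_z). For the map f(Z,P) = (ηαPZ/(h_p+P) − d_z Z, r_p P(1 − P/K) − αPZ/(h_p+P)), the trace of the Jacobian matrix of f at the coexistence equilibrium (Z*, P*) equals r_p P*(K − K^c)/(K(h_p + P*)); in particular, K^c = h_p + 2P*, and the trace is negative if K < K^c, zero if K = K^c, and positive if K > K^c. -/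

import Mathlib

/-- The trace of the Jacobian of the plankton vector field at the coexistence
equilibrium `(Z*, P*)` equals `r_p P*(K − K^c)/(K(h_p + P*))`, where
`K^c = h_p(ηα + d_z)/(ηα − d_z) = h_p + 2P*`; its sign is determined by the
comparison of `K` with `K^c`. -/
theorem coexistence_jacobian_trace
    (η α h_p d_z r_p K : ℝ)
    (hη : 0 < η) (hα : 0 < α) (hhp : 0 < h_p) (hdz : 0 < d_z)
    (hrp : 0 < r_p) (hK : 0 < K)
    (hCP : η * α / d_z > 1)
    (hCZ : K * (η * α / d_z) / (h_p + K) > 1)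
    (Pstar Zstar Kc : ℝ)
    (hP : Pstar = d_z * h_p / (η * α - d_z))
    (hZ : Zstar = (r_p / α) * (1 - Pstar / K) * (h_p + Pstar))
    (hKc : Kc = h_p * (η * α + d_z) / (η * α - d_z))
    (f₁ f₂ : ℝ → ℝ → ℝ)
    (hf₁ : f₁ = fun Z P => η * α * P * Z / (h_p + P) - d_z * Z)
    (hf₂ : f₂ = fun Z P => r_p * P * (1 - P / K) - α * P * Z / (h_p + P))
    (J : Matrix (Fin 2) (Fin 2) ℝ)
    (hJ : J = !![deriv (fun Z => f₁ Z Pstar) Zstar, deriv (fun P => f₁ Zstar P) Pstar;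
                 deriv (fun Z => f₂ Z Pstar) Zstar, deriv (fun P => f₂ Zstar P) Pstar]) :
    J.trace = r_p * Pstar * (K - Kc) / (K * (h_p + Pstar)) ∧
    Kc = h_p + 2 * Pstar ∧
    (K < Kc → J.trace < 0) ∧
    (K = Kc → J.trace = 0) ∧
    (K > Kc → J.trace > 0) := by
  have hden : 0 < η * α - d_z := by
    have := (lt_div_iff₀ hdz).mp hCP
    linarith
  have hPpos : 0 < Pstar := hP ▸ div_pos (mul_pos hdz hhp) hden
  have hhpP : 0 < h_p + Pstar := by linarith
  have hhpPne : h_p + Pstar ≠ 0 := ne_of_gt hhpP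
  have hKne : K ≠ 0 := ne_of_gt hK
  -- the (0,0) entry
  have h00 : deriv (fun Z => f₁ Z Pstar) Zstar
      = η * α * Pstar / (h_p + Pstar) - d_z := by
    subst hf₁
    have heq : (fun Z => η * α * Pstar * Z / (h_p + Pstar) - d_z * Z)
        = fun Z => (η * α * Pstar / (h_p + Pstar) - d_z) * Z := by
      funext Z; ring
    rw [heq]
    have h := (hasDerivAt_id Zstar).const_mul (η * α * Pstar / (h_p + Pstar) - d_z)
    simpa using h.deriv
  -- the (1,1) entry
  have h11 : deriv (fun P => f₂ Zstar P) Pstar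
      = (r_p * 1 * (1 - Pstar / K) + r_p * Pstar * (-(1 / K)))
        - (α * 1 * Zstar * (h_p + Pstar) - α * Pstar * Zstar * 1) / (h_p + Pstar) ^ 2 := by
    subst hf₂
    have h1 : HasDerivAt (fun P : ℝ => r_p * P * (1 - P / K))
        (r_p * 1 * (1 - Pstar / K) + r_p * Pstar * (-(1 / K))) Pstar := by
      have ha : HasDerivAt (fun P : ℝ => r_p * P) (r_p * 1) Pstar :=
        (hasDerivAt_id Pstar).const_mul r_p
      have hb : HasDerivAt (fun P : ℝ => 1 - P / K) (-(1 / K)) Pstar := by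
        have := ((hasDerivAt_id Pstar).div_const K).const_sub 1
        simpa using this
      simpa using ha.fun_mul hb
    have h2 : HasDerivAt (fun P : ℝ => α * P * Zstar / (h_p + P))
        ((α * 1 * Zstar * (h_p + Pstar) - α * Pstar * Zstar * 1) / (h_p + Pstar) ^ 2)
        Pstar := by
      have hu : HasDerivAt (fun P : ℝ => α * P * Zstar) (α * 1 * Zstar) Pstar := by
        have := ((hasDerivAt_id Pstar).const_mul α).mul_const Zstar
        simpa using this
      have hv : HasDerivAt (fun P : ℝ => h_p + P) 1 Pstar := by
        simpa using (hasDerivAt_id Pstar).const_add h_p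
      simpa using hu.fun_div hv hhpPne
    exact (h1.sub h2).deriv
  have htr : J.trace = r_p * Pstar * (K - Kc) / (K * (h_p + Pstar)) := by
    rw [hJ]
    rw [Matrix.trace_fin_two_of]
    rw [h00, h11, hZ, hKc, hP]
    have hdenne : η * α - d_z ≠ 0 := ne_of_gt hden
    have hne2 : h_p + d_z * h_p / (η * α - d_z) ≠ 0 := by
      rw [← hP]; exact hhpPne
    field_simp
    ring
  have hKc2 : Kc = h_p + 2 * Pstar := by
    rw [hKc, hP]
    have hdenne : η * α - d_z ≠ 0 := ne_of_gt hden
    field_simp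
    ring
  have hKPpos : 0 < K * (h_p + Pstar) := mul_pos hK hhpP
  have hrPpos : 0 < r_p * Pstar := mul_pos hrp hPpos
  refine ⟨htr, hKc2, ?_, ?_, ?_⟩
  · intro h
    rw [htr]
    exact div_neg_of_neg_of_pos (mul_neg_of_pos_of_neg hrPpos (by linarith)) hKPpos
  · intro h
    rw [htr, h]
    simp
  · intro h
    rw [htr]
    exact div_pos (mul_pos hrPpos (by linarith)) hKPpos
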